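/- arXiv:math/0410487 — 4 statements merged into one kernel-verified Lean document; each statement's English description precedes it below -/
import Mathlib

section
/- Let G = (G^a_b) be an r×r matrix with entries in ℂ[[q^1,…,q^r]] which is invertible over ℂ[[q^1,…,q^r]] (equivalently, G(0) ∈ GL_r(ℂ)). Then the following are equivalent: (i) θ_c G^a_b = θ_b G^a_c for all a, b, c, and there is a permutation σ of {1,…,r} with G^a_b(0) = δ^{σ(a)}_b; (ii) there exist a permutation σ of {1,…,r} and δ^1, …, δ^r ∈ m such that, setting f^a := q^{σ(a)}·exp(δ^a), one has θ_b f^a = G^a_b·f^a for all a, b (i.e. G is the log-Jacobi matrix ∂log f^a/∂log q^b of the coordinate change q ↦ f). Moreover, in (ii) the permutation σ and the series δ^1,…,δ^r are uniquely determined; equivalently, the new coordinates f^a are determined up to multiplication by nonzero constants f^a ↦ c^a f^a. -/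
/-!
Work over ℂ.  `OO r = ℂ[[q¹,…,qʳ]]` is the ring of formal power series,
`m` its maximal ideal (power series with zero constant term), and
`θ_a = qᵃ·∂/∂qᵃ` the logarithmic partial derivative.
-/

noncomputable section

/-- `𝒪 = ℂ[[q¹,…,qʳ]]`, the ring of formal power series. -/
abbrev OO (r : ℕ) := MvPowerSeries (Fin r) ℂ

/-- The logarithmic derivative `θ_a = qᵃ ∂/∂qᵃ` on `ℂ[[q]]`:
on the monomial `q^d` it acts by multiplication by `d a`. -/
def thetaO {r : ℕ} (a : Fin r) (F : OO r) : OO r := fun d => (d a : ℂ) * F d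

/-- The constant term at `q = 0`; membership in `m` is `ccO F = 0`. -/
def ccO {r : ℕ} : OO r →+* ℂ := MvPowerSeries.constantCoeff

/-- total degree of a monomial exponent -/
def degOf {r : ℕ} (d : Fin r →₀ ℕ) : ℕ := d.sum fun _ k => k

/-- The formal exponential `exp(δ) = Σ_k δ^k/k!` of a power series `δ` with zero
constant term; for such `δ` the coefficient of `q^d` only receives contributions
from `k ≤ |d|`, so the truncated sum below is the full exponential. -/
def fexpO {r : ℕ} (δ : OO r) : OO r :=
  fun d => ∑ k ∈ Finset.range (degOf d + 1), (k.factorial : ℂ)⁻¹ * ((δ ^ k) d)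

/-- The condition that `(G, σ, δ)` realizes `G` as the log-Jacobi matrix
`G^a_b = ∂ log f^a / ∂ log q^b` of the coordinate change `f^a = q^{σ(a)}·exp(δ^a)`,
i.e. `θ_b f^a = G^a_b · f^a` with `δ^a ∈ m`. -/
def IsLogJacobiDatum {r : ℕ} (G : Matrix (Fin r) (Fin r) (OO r))
    (σ : Equiv.Perm (Fin r)) (δ : Fin r → OO r) : Prop :=
  (∀ a, ccO (δ a) = 0) ∧
  ∀ a b, thetaO b (MvPowerSeries.X (σ a) * fexpO (δ a)) =
    G a b * (MvPowerSeries.X (σ a) * fexpO (δ a))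

namespace LJAux

open MvPowerSeries Finset

variable {r : ℕ}

lemma coeff_theta (b : Fin r) (F : OO r) (d : Fin r →₀ ℕ) :
    MvPowerSeries.coeff d (thetaO b F) = (d b : ℂ) * MvPowerSeries.coeff d F := rfl

lemma ccO_apply (F : OO r) : ccO F = F 0 := rfl

/-- `thetaO b` as a linear map. -/
def thetaL (b : Fin r) : OO r →ₗ[ℂ] OO r where
  toFun := thetaO b
  map_add' F G := by
    ext d
    show (d b : ℂ) * (F d + G d) = (d b : ℂ) * F d + (d b : ℂ) * G d
    ring
  map_smul' c F := by
    ext d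
    show (d b : ℂ) * (c * F d) = c * ((d b : ℂ) * F d)
    ring

lemma thetaL_apply (b : Fin r) (F : OO r) : thetaL b F = thetaO b F := rfl

lemma theta_add (c : Fin r) (F G : OO r) :
    thetaO c (F + G) = thetaO c F + thetaO c G := map_add (thetaL c) F G

lemma theta_one (b : Fin r) : thetaO b (1 : OO r) = 0 := by
  ext d
  rw [coeff_theta, MvPowerSeries.coeff_one]
  rcases eq_or_ne d 0 with h | h
  · simp [h]
  · simp [h]

lemma theta_ite (c : Fin r) (P : Prop) [Decidable P] :
    thetaO c (if P then (1 : OO r) else 0) = 0 := by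
  split_ifs
  · exact theta_one c
  · exact map_zero (thetaL c)

lemma theta_ccO (b : Fin r) (F : OO r) : ccO (thetaO b F) = 0 := by
  show ((0 : Fin r →₀ ℕ) b : ℂ) * F 0 = 0
  simp

lemma theta_mul (b : Fin r) (F G : OO r) :
    thetaO b (F * G) = thetaO b F * G + F * thetaO b G := by
  ext d
  rw [map_add, coeff_theta, coeff_mul, coeff_mul, coeff_mul, mul_sum, ← sum_add_distrib]
  refine sum_congr rfl fun p hp => ?_
  rw [HasAntidiagonal.mem_antidiagonal] at hp
  have h : (p.1 b : ℂ) + (p.2 b : ℂ) = (d b : ℂ) := by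
    rw [← hp]
    push_cast [Finsupp.add_apply]
    ring
  rw [coeff_theta, coeff_theta, ← h]
  ring

lemma theta_theta (b c : Fin r) (F : OO r) :
    thetaO c (thetaO b F) = thetaO b (thetaO c F) := by
  ext d
  show (d c : ℂ) * ((d b : ℂ) * F d) = (d b : ℂ) * ((d c : ℂ) * F d)
  ring

lemma degOf_add (u v : Fin r →₀ ℕ) : degOf (u + v) = degOf u + degOf v := by
  unfold degOf
  exact Finsupp.sum_add_index (fun _ _ => rfl) (fun _ _ _ _ => rfl)

lemma degOf_eq_sum (d : Fin r →₀ ℕ) : degOf d = ∑ b, d b := by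
  unfold degOf
  rw [Finsupp.sum_fintype]
  intro _; rfl

lemma degOf_eq_zero {d : Fin r →₀ ℕ} (h : degOf d = 0) : d = 0 := by
  rw [degOf_eq_sum] at h
  ext b
  exact (Finset.sum_eq_zero_iff.mp h) b (mem_univ b)

lemma pow_coeff_zero {δ : OO r} (h : ccO δ = 0) :
    ∀ (k : ℕ) (d : Fin r →₀ ℕ), degOf d < k → (δ ^ k) d = 0 := by
  intro k
  induction k with
  | zero => intro d hd; omega
  | succ k ih =>
      intro d hd
      have : MvPowerSeries.coeff d (δ ^ k * δ) = 0 := by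
        rw [coeff_mul]
        refine Finset.sum_eq_zero fun p hp => ?_
        rw [HasAntidiagonal.mem_antidiagonal] at hp
        rcases eq_or_ne p.2 0 with h2 | h2
        · have : MvPowerSeries.coeff p.2 δ = 0 := by rw [h2]; exact h
          rw [this, mul_zero]
        · have hdeg : degOf p.1 + degOf p.2 = degOf d := by rw [← hp, degOf_add]
          have h2' : degOf p.2 ≠ 0 := fun hz => h2 (degOf_eq_zero hz)
          have : degOf p.1 < k := by omega
          rw [show MvPowerSeries.coeff p.1 (δ ^ k) = (δ ^ k) p.1 from rfl, ih p.1 this,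
            zero_mul]
      rw [← pow_succ] at this
      exact this

lemma theta_pow (b : Fin r) (δ : OO r) (k : ℕ) :
    thetaO b (δ ^ (k + 1)) = ((k : ℂ) + 1) • (δ ^ k * thetaO b δ) := by
  induction k with
  | zero => simp [theta_mul, theta_one]
  | succ k ih =>
      rw [pow_succ, theta_mul, ih, smul_mul_assoc]
      have h1 : δ ^ k * thetaO b δ * δ = δ ^ (k + 1) * thetaO b δ := by ring
      rw [h1]
      have h2 : (((k + 1 : ℕ) : ℂ) + 1) = ((k : ℂ) + 1) + 1 := by push_cast; ring
      rw [h2, add_smul ((k : ℂ) + 1) 1, one_smul]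

/-- truncated exponential -/
def EN (δ : OO r) (N : ℕ) : OO r :=
  ∑ k ∈ Finset.range (N + 1), (k.factorial : ℂ)⁻¹ • δ ^ k

lemma EN_coeff (δ : OO r) (N : ℕ) (d : Fin r →₀ ℕ) :
    MvPowerSeries.coeff d (EN δ N) =
      ∑ k ∈ Finset.range (N + 1), (k.factorial : ℂ)⁻¹ * ((δ ^ k) d) := by
  unfold EN
  rw [map_sum]
  refine sum_congr rfl fun k _ => ?_
  rw [map_smul]
  rfl

lemma fexp_coeff {δ : OO r} (h : ccO δ = 0) {d : Fin r →₀ ℕ} {N : ℕ} (hd : degOf d ≤ N) :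
    fexpO δ d = MvPowerSeries.coeff d (EN δ N) := by
  rw [EN_coeff]
  show ∑ k ∈ Finset.range (degOf d + 1), (k.factorial : ℂ)⁻¹ * ((δ ^ k) d) = _
  refine Finset.sum_subset (Finset.range_subset_range.mpr (by omega)) fun k _ hk => ?_
  rw [mem_range, not_lt] at hk
  rw [pow_coeff_zero h k d (by omega), mul_zero]

lemma theta_EN (b : Fin r) (δ : OO r) (N : ℕ) :
    thetaO b (EN δ (N + 1)) = thetaO b δ * EN δ N := by
  unfold EN
  rw [← thetaL_apply, map_sum]
  rw [Finset.sum_range_succ']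
  simp only [map_smul, thetaL_apply]
  rw [pow_zero, theta_one, smul_zero, add_zero]
  rw [Finset.mul_sum]
  refine sum_congr rfl fun k _ => ?_
  rw [theta_pow, smul_smul]
  have hfac : (((k + 1).factorial : ℂ))⁻¹ * ((k : ℂ) + 1) = ((k.factorial : ℂ))⁻¹ := by
    rw [Nat.factorial_succ]
    push_cast
    have h1 : ((k : ℂ) + 1) ≠ 0 := by
      have := Nat.cast_add_one_ne_zero (R := ℂ) k
      exact_mod_cast this
    have h2 : (k.factorial : ℂ) ≠ 0 := Nat.cast_ne_zero.mpr (Nat.factorial_ne_zero k)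
    field_simp
  rw [hfac, mul_smul_comm]
  congr 1
  ring

lemma theta_fexp {δ : OO r} (h : ccO δ = 0) (b : Fin r) :
    thetaO b (fexpO δ) = thetaO b δ * fexpO δ := by
  ext d
  have h1 : MvPowerSeries.coeff d (fexpO δ) = MvPowerSeries.coeff d (EN δ (degOf d + 1)) :=
    fexp_coeff h (by omega)
  calc MvPowerSeries.coeff d (thetaO b (fexpO δ))
      = (d b : ℂ) * MvPowerSeries.coeff d (fexpO δ) := rfl
    _ = MvPowerSeries.coeff d (thetaO b (EN δ (degOf d + 1))) := by
        rw [h1]; rfl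
    _ = MvPowerSeries.coeff d (thetaO b δ * EN δ (degOf d)) := by rw [theta_EN]
    _ = MvPowerSeries.coeff d (thetaO b δ * fexpO δ) := by
        rw [coeff_mul, coeff_mul]
        refine sum_congr rfl fun p hp => ?_
        rw [HasAntidiagonal.mem_antidiagonal] at hp
        have : degOf p.2 ≤ degOf d := by
          have := degOf_add p.1 p.2
          rw [hp] at this
          omega
        congr 1
        exact (fexp_coeff h this).symm

lemma fexp_cc (δ : OO r) : ccO (fexpO δ) = 1 := by
  show fexpO δ 0 = 1
  unfold fexpO
  have : degOf (0 : Fin r →₀ ℕ) = 0 := by simp [degOf]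
  rw [this, Finset.sum_range_one, pow_zero]
  have h1 : ((1 : OO r)) 0 = 1 := by
    show MvPowerSeries.coeff 0 (1 : OO r) = 1
    simp
  rw [h1]
  norm_num

lemma fexp_ne_zero (δ : OO r) : fexpO δ ≠ 0 := by
  intro h
  have := fexp_cc δ
  rw [h] at this
  simp at this

lemma theta_X (b i : Fin r) :
    thetaO b (MvPowerSeries.X i : OO r) = if b = i then MvPowerSeries.X i else 0 := by
  ext d
  rw [coeff_theta, MvPowerSeries.coeff_X]
  by_cases hb : b = i
  · subst hb
    rw [if_pos rfl, MvPowerSeries.coeff_X]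
    by_cases hd : d = Finsupp.single b 1
    · rw [if_pos hd, hd]
      simp
    · rw [if_neg hd, mul_zero]
  · rw [if_neg hb, map_zero]
    by_cases hd : d = Finsupp.single i 1
    · rw [if_pos hd, hd, mul_one]
      simp [Finsupp.single_apply, Ne.symm hb]
    · rw [if_neg hd, mul_zero]

lemma theta_X_mul_fexp {δ : OO r} (h : ccO δ = 0) (i b : Fin r) :
    thetaO b (MvPowerSeries.X i * fexpO δ) =
      ((if b = i then (1 : OO r) else 0) + thetaO b δ) * (MvPowerSeries.X i * fexpO δ) := by
  rw [theta_mul, theta_X, theta_fexp h]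
  split_ifs with h1
  · ring
  · ring

lemma X_ne_zero' (i : Fin r) : (MvPowerSeries.X i : OO r) ≠ 0 := by
  intro h
  have h2 : MvPowerSeries.coeff (Finsupp.single i 1) (MvPowerSeries.X i : OO r) = 1 := by
    rw [MvPowerSeries.coeff_X, if_pos rfl]
  rw [h, map_zero] at h2
  exact zero_ne_one h2

lemma XE_ne_zero (δ : OO r) (i : Fin r) :
    (MvPowerSeries.X i : OO r) * fexpO δ ≠ 0 :=
  mul_ne_zero (X_ne_zero' i) (fexp_ne_zero δ)

lemma datum_G {G : Matrix (Fin r) (Fin r) (OO r)} {σ : Equiv.Perm (Fin r)} {δ : Fin r → OO r}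
    (h : IsLogJacobiDatum G σ δ) (a b : Fin r) :
    G a b = (if b = σ a then (1 : OO r) else 0) + thetaO b (δ a) := by
  have h2 := h.2 a b
  rw [theta_X_mul_fexp (h.1 a)] at h2
  exact (mul_right_cancel₀ (XE_ne_zero (δ a) (σ a)) h2).symm

lemma ccO_ite (b i : Fin r) :
    ccO (if b = i then (1 : OO r) else 0) = if b = i then (1 : ℂ) else 0 := by
  split_ifs <;> simp

lemma theta_eq_of_forall {δ δ' : OO r} (h0 : ccO δ = 0) (h0' : ccO δ' = 0)
    (h : ∀ b, thetaO b δ = thetaO b δ') : δ = δ' := by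
  ext d
  rcases eq_or_ne d 0 with hd | hd
  · subst hd
    show δ 0 = δ' 0
    exact h0.trans h0'.symm
  · obtain ⟨b, hb⟩ : ∃ b, d b ≠ 0 := by
      by_contra hc
      push_neg at hc
      exact hd (Finsupp.ext hc)
    have := congrFun (h b) d
    have hb' : (d b : ℂ) ≠ 0 := Nat.cast_ne_zero.mpr hb
    show δ d = δ' d
    exact mul_left_cancel₀ hb' this

end LJAux

open LJAux Finset

/-- **Characterization of log-Jacobi matrices** (Lemma 3.4).  An invertible matrix
`G` over `ℂ[[q]]` is the log-Jacobi matrix of a formal coordinate change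
`q ↦ (q^{σ(a)} exp δ^a)_a` if and only if `θ_c G^a_b = θ_b G^a_c` for all
`a, b, c` and `G^a_b(0) = δ^{σ(a)}_b` for some permutation `σ`; moreover the
permutation `σ` and the series `δ^1, …, δ^r ∈ m` are uniquely determined. -/
theorem logJacobi_characterization {r : ℕ} (hr : 1 ≤ r)
    (G : Matrix (Fin r) (Fin r) (OO r)) (hG : IsUnit G) :
    (((∀ a b c, thetaO c (G a b) = thetaO b (G a c)) ∧
        ∃ σ : Equiv.Perm (Fin r), ∀ a b, ccO (G a b) = if b = σ a then 1 else 0) ↔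
      ∃ σ : Equiv.Perm (Fin r), ∃ δ : Fin r → OO r, IsLogJacobiDatum G σ δ) ∧
    (∀ (σ σ' : Equiv.Perm (Fin r)) (δ δ' : Fin r → OO r),
      IsLogJacobiDatum G σ δ → IsLogJacobiDatum G σ' δ' → σ = σ' ∧ δ = δ') := by
  constructor
  · constructor
    · -- (i) → (ii)
      rintro ⟨hsym, σ, hcc⟩
      -- the "reduced" matrix g a b = G a b - δ_{b,σa} ∈ m
      set g : Fin r → Fin r → OO r :=
        fun a b => G a b - (if b = σ a then (1 : OO r) else 0) with hg
      have hgcc : ∀ a b, ccO (g a b) = 0 := by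
        intro a b
        rw [hg]
        simp only [map_sub, ccO_ite, hcc a b, sub_self]
      have hgsym : ∀ a b c, thetaO c (g a b) = thetaO b (g a c) := by
        intro a b c
        rw [hg]
        simp only
        rw [← thetaL_apply, ← thetaL_apply, map_sub, map_sub]
        simp only [thetaL_apply, theta_ite, hsym a b c]
      -- the formal primitive δ a
      set δ : Fin r → OO r := fun a d =>
        if d = 0 then 0 else (degOf d : ℂ)⁻¹ * ∑ c, g a c d with hδ
      have hδcc : ∀ a, ccO (δ a) = 0 := by
        intro a
        rw [ccO_apply, hδ]
        simp
      have hθδ : ∀ a b, thetaO b (δ a) = g a b := by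
        intro a b
        ext d
        show (d b : ℂ) * δ a d = g a b d
        rcases eq_or_ne d 0 with hd | hd
        · subst hd
          have : g a b 0 = 0 := hgcc a b
          simp [hδ, this]
        · rw [hδ]
          simp only [if_neg hd]
          have hsum : ∀ c, (d c : ℂ) * g a b d = (d b : ℂ) * g a c d := by
            intro c
            exact congrFun (hgsym a b c) d
          have hkey : (degOf d : ℂ) * g a b d = (d b : ℂ) * ∑ c, g a c d := by
            rw [degOf_eq_sum]
            push_cast
            rw [Finset.sum_mul, Finset.mul_sum]
            exact Finset.sum_congr rfl fun c _ => hsum c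
          have hdeg : (degOf d : ℂ) ≠ 0 :=
            Nat.cast_ne_zero.mpr fun hz => hd (degOf_eq_zero hz)
          have h2 : (d b : ℂ) * ((degOf d : ℂ)⁻¹ * ∑ c, g a c d)
              = (degOf d : ℂ)⁻¹ * ((d b : ℂ) * ∑ c, g a c d) := by ring
          rw [h2, ← hkey, ← mul_assoc, inv_mul_cancel₀ hdeg, one_mul]
      refine ⟨σ, δ, hδcc, fun a b => ?_⟩
      rw [theta_X_mul_fexp (hδcc a), hθδ a b, hg]
      simp only
      rw [add_sub_cancel]
    · -- (ii) → (i)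
      rintro ⟨σ, δ, hdat⟩
      have hG' := datum_G hdat
      constructor
      · intro a b c
        rw [hG' a b, hG' a c, theta_add, theta_add, theta_ite, theta_ite, zero_add, zero_add,
          theta_theta]
      · refine ⟨σ, fun a b => ?_⟩
        rw [hG' a b, map_add, ccO_ite, theta_ccO, add_zero]
  · -- uniqueness
    intro σ σ' δ δ' h h'
    have hG1 := datum_G h
    have hG2 := datum_G h'
    have hσ : σ = σ' := by
      refine Equiv.ext fun a => ?_
      have e1 : ccO (G a (σ a)) = 1 := by
        rw [hG1 a (σ a), map_add, ccO_ite, theta_ccO, add_zero, if_pos rfl]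
      have e2 : ccO (G a (σ a)) = if σ a = σ' a then 1 else 0 := by
        rw [hG2 a (σ a), map_add, ccO_ite, theta_ccO, add_zero]
      rw [e1] at e2
      by_contra hne
      rw [if_neg hne] at e2
      exact one_ne_zero e2
    subst hσ
    refine ⟨rfl, funext fun a => ?_⟩
    refine theta_eq_of_forall (h.1 a) (h'.1 a) fun b => ?_
    have := (hG1 a b).symm.trans (hG2 a b)
    exact add_left_cancel this
end
end

section
/- In the setting of the existence theorem for S — Ω_1,…,Ω_r ∈ Mat_n(ℂ[ħ][[q]]) flat with p_a := Ω_a|_{q=0} ∈ Mat_n(ℂ) independent of ħ, and S ∈ Mat_n(ℂ[ħ,ħ^{-1}]][[q]]) the unique matrix with S|_{q=0} = Id and ħθ_a S + Ω_a S − S p_a = 0 for all a — assume in addition that every Ω_a is independent of ħ, i.e. has entries in ℂ[[q^1,…,q^r]]. Then S lies in Mat_n(ℂ[[ħ^{-1}]][[q]]); that is, S contains no positive powers of ħ and is regular at ħ = ∞. -/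
/-!
Work over ℂ.  We represent the coefficient ring `ℂ[ħ,ħ⁻¹]]` (formal Laurent
series `Σ_{k ≤ K} c_k ħ^k` with finitely many positive powers of `ħ`) as
`LaurentSeries ℂ` in the variable `t = ħ⁻¹`; thus the coefficient of `t^k`
is the coefficient of `ħ^{-k}`.  `AA r = ℂ[ħ,ħ⁻¹]][[q¹,…,qʳ]]`, and
`θ_a = qᵃ·∂/∂qᵃ` is the logarithmic partial derivative.
-/

noncomputable section

/-- `ℂ[ħ,ħ⁻¹]]`, realized as Laurent series in `t = ħ⁻¹`. -/
abbrev LS := LaurentSeries ℂ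

/-- `ħ = t⁻¹` where `t` is the `LaurentSeries` variable. -/
def hbarL : LS := HahnSeries.single (-1 : ℤ) (1 : ℂ)

/-- `ℂ[ħ,ħ⁻¹]][[q¹,…,qʳ]]`. -/
abbrev AA (r : ℕ) := MvPowerSeries (Fin r) LS

/-- The logarithmic derivative `θ_a = qᵃ ∂/∂qᵃ`:
on the monomial `q^d` it acts by multiplication by `d a`. -/
def thetaA {r : ℕ} (a : Fin r) (x : AA r) : AA r := fun d => (d a : LS) * x d

/-- `θ_a` acting entrywise on matrices. -/
def thetaMat {r n : ℕ} (a : Fin r) (M : Matrix (Fin n) (Fin n) (AA r)) :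
    Matrix (Fin n) (Fin n) (AA r) :=
  Matrix.of fun i j => thetaA a (M i j)

/-- `ħ` as an element of `ℂ[ħ,ħ⁻¹]][[q]]`. -/
def hbarA (r : ℕ) : AA r := MvPowerSeries.C (σ := Fin r) (R := LS) hbarL

/-- The constant term at `q = 0`. -/
def ccA {r : ℕ} : AA r →+* LS := MvPowerSeries.constantCoeff (σ := Fin r) (R := LS)

/-- The embedding `ℂ → ℂ[ħ,ħ⁻¹]][[q]]`. -/
def cA (r : ℕ) : ℂ →+* AA r := (MvPowerSeries.C (σ := Fin r) (R := LS)).comp HahnSeries.C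

/-- `x ∈ ℂ[ħ]`: `x` is a polynomial in `ħ` (no negative powers of `ħ`,
i.e. no positive powers of `t`; finiteness is automatic for Laurent series). -/
def isPolyH (x : LS) : Prop := ∀ k : ℤ, 0 < k → x.coeff k = 0

/-- `x ∈ ℂ[[ħ⁻¹]]`: `x` is regular at `ħ = ∞` (no positive powers of `ħ`). -/
def isRegH (x : LS) : Prop := ∀ k : ℤ, k < 0 → x.coeff k = 0

/-- `x ∈ ℂ`: `x` is a constant, independent of `ħ`. -/
def isConstH (x : LS) : Prop := ∀ k : ℤ, k ≠ 0 → x.coeff k = 0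

/-- A matrix over `ℂ[ħ,ħ⁻¹]][[q]]` has entries in `ℂ[ħ][[q]]`. -/
def MatPolyH {r n : ℕ} (M : Matrix (Fin n) (Fin n) (AA r)) : Prop :=
  ∀ i j d, isPolyH (M i j d)

/-- A matrix over `ℂ[ħ,ħ⁻¹]][[q]]` has entries in `ℂ[[ħ⁻¹]][[q]]`. -/
def MatRegH {r n : ℕ} (M : Matrix (Fin n) (Fin n) (AA r)) : Prop :=
  ∀ i j d, isRegH (M i j d)

/-- A matrix over `ℂ[ħ,ħ⁻¹]][[q]]` has entries in `ℂ[[q]]`,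
i.e. is independent of `ħ`. -/
def MatConstH {r n : ℕ} (M : Matrix (Fin n) (Fin n) (AA r)) : Prop :=
  ∀ i j d, isConstH (M i j d)

/-- Flatness: `ħ(θ_aΩ_b − θ_bΩ_a) + Ω_aΩ_b − Ω_bΩ_a = 0` for all `a, b`. -/
def IsFlat {r n : ℕ} (Ω : Fin r → Matrix (Fin n) (Fin n) (AA r)) : Prop :=
  ∀ a b, hbarA r • (thetaMat a (Ω b) - thetaMat b (Ω a)) + (Ω a * Ω b - Ω b * Ω a) = 0


/-- Helper: multiplication by `ħ = t⁻¹` shifts Laurent coefficients. -/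
lemma hbarL_mul_coeff (x : LS) (k : ℤ) : (hbarL * x).coeff k = x.coeff (k + 1) := by
  have h := HahnSeries.coeff_single_mul_add (r := (1:ℂ)) (x := x) (a := k + 1) (b := -1)
  rw [show (k + 1) + (-1) = k by ring, one_mul] at h
  rw [hbarL, h]

/-- Helper: multiplying by an `ħ`-independent Laurent series acts coefficientwise. -/
lemma const_mul_coeff {x : LS} (hx : isConstH x) (y : LS) (k : ℤ) :
    (x * y).coeff k = x.coeff 0 * y.coeff k := by
  have hxe : x = HahnSeries.single (0 : ℤ) (x.coeff 0) := by
    ext k'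
    rcases eq_or_ne k' 0 with rfl | h
    · rw [HahnSeries.coeff_single_same]
    · rw [HahnSeries.coeff_single_of_ne h, hx k' h]
  conv_lhs => rw [hxe]
  rw [HahnSeries.coeff_single_zero_mul]

lemma LS_sum_coeff {ι : Type*} (s : Finset ι) (f : ι → LS) (k : ℤ) :
    (∑ x ∈ s, f x).coeff k = ∑ x ∈ s, (f x).coeff k :=
  map_sum (HahnSeries.coeff.addMonoidHom k) f s

lemma natCast_mul_coeff (m : ℕ) (x : LS) (k : ℤ) :
    (((m : ℕ) : LS) * x).coeff k = (m : ℂ) * x.coeff k := by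
  have h : ((m : ℕ) : LS) = HahnSeries.C (m : ℂ) := (map_natCast (HahnSeries.C : ℂ →+* LS) m).symm
  rw [h, HahnSeries.C_apply, HahnSeries.coeff_single_zero_mul]

lemma C_coeff_mul (x : LS) (c : ℂ) (k : ℤ) :
    (x * HahnSeries.C c).coeff k = x.coeff k * c := by
  rw [HahnSeries.C_apply, HahnSeries.coeff_mul_single_zero]

/-- **Regularity of `S` at `ħ = ∞`** (Remark 3.7).  If, in the setting of the
existence theorem for `S` (flat `Ω_a ∈ Mat_n(ℂ[ħ][[q]])` with `p_a = Ω_a|_{q=0}`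
independent of `ħ`), every `Ω_a` is moreover independent of `ħ`, then the
unique flat section `S` lies in `Mat_n(ℂ[[ħ⁻¹]][[q]])`: it contains no
positive powers of `ħ`. -/
theorem flat_section_regular_at_infinity {r n : ℕ} (hr : 1 ≤ r) (hn : 1 ≤ n)
    (Ω : Fin r → Matrix (Fin n) (Fin n) (AA r))
    (hpoly : ∀ a, MatPolyH (Ω a))
    (hflat : IsFlat Ω)
    (p : Fin r → Matrix (Fin n) (Fin n) ℂ)
    (hp : ∀ a i j, ccA (Ω a i j) = HahnSeries.C (p a i j))
    (hconst : ∀ a, MatConstH (Ω a))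
    (S : Matrix (Fin n) (Fin n) (AA r))
    (hScc : S.map ccA = 1)
    (hSeq : ∀ a, hbarA r • thetaMat a S + Ω a * S - S * (p a).map (cA r) = 0) :
    MatRegH S := by
  -- Step 1: the scalar coefficient equation extracted from `hSeq`.
  have main : ∀ (a : Fin r) (i j : Fin n) (d : Fin r →₀ ℕ) (k : ℤ),
      (d a : ℂ) * (S i j d).coeff (k + 1)
        + ∑ l, ∑ pr ∈ Finset.HasAntidiagonal.antidiagonal d, (Ω a i l pr.1).coeff 0 * (S l j pr.2).coeff k
        - ∑ l, (S i l d).coeff k * p a l j = 0 := by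
    intro a i j d k
    have E := congr_fun (congr_fun (hSeq a) i) j
    have E1 : hbarA r * thetaA a (S i j) + (∑ l, Ω a i l * S l j)
        - ∑ l, S i l * cA r (p a l j) = 0 := by
      simpa [Matrix.add_apply, Matrix.sub_apply, Matrix.smul_apply, Matrix.mul_apply,
        Matrix.zero_apply, Matrix.map_apply, thetaMat, Matrix.of_apply, smul_eq_mul] using E
    have E2 := congrArg (MvPowerSeries.coeff d) E1
    simp only [map_add, map_sub, map_sum, map_zero, hbarA, MvPowerSeries.coeff_C_mul, cA,
      RingHom.comp_apply, MvPowerSeries.coeff_mul_C] at E2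
    simp only [MvPowerSeries.coeff_mul] at E2
    simp only [thetaA, MvPowerSeries.coeff_apply] at E2
    have E3 := congrArg (fun x : LS => x.coeff k) E2
    simp only [HahnSeries.coeff_add, HahnSeries.coeff_sub, HahnSeries.coeff_zero,
      LS_sum_coeff, hbarL_mul_coeff, natCast_mul_coeff, C_coeff_mul] at E3
    have hprod : ∀ (l : Fin n) (pr : (Fin r →₀ ℕ) × (Fin r →₀ ℕ)),
        (Ω a i l pr.1 * S l j pr.2).coeff k = (Ω a i l pr.1).coeff 0 * (S l j pr.2).coeff k :=
      fun l pr => const_mul_coeff (hconst a i l pr.1) _ _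
    simpa only [hprod] using E3
  -- Step 2: the main induction on the total degree of the monomial `d`.
  have key : ∀ m : ℕ, ∀ d : Fin r →₀ ℕ, (∑ b, d b) ≤ m →
      ∀ i j, ∀ k : ℤ, k < 0 → (S i j d).coeff k = 0 := by
    intro m
    induction m with
    | zero =>
      intro d hd i j k hk
      have hd0 : d = 0 := by
        ext b
        simpa using (Finset.sum_eq_zero_iff.mp (Nat.le_zero.mp hd)) b (Finset.mem_univ b)
      subst hd0
      have h1 := congr_fun (congr_fun hScc i) j
      rw [Matrix.map_apply] at h1
      have h2 : S i j 0 = (1 : Matrix (Fin n) (Fin n) LS) i j := by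
        rw [← h1]
        rfl
      rcases eq_or_ne i j with rfl | hij
      · rw [h2, Matrix.one_apply_eq]
        rw [HahnSeries.coeff_one, if_neg hk.ne]
      · rw [h2, Matrix.one_apply_ne hij]
        exact HahnSeries.coeff_zero
    | succ m IH =>
      intro d hd i j k hk
      by_cases hcase : (∑ b, d b) ≤ m
      · exact IH d hcase i j k hk
      have hdm : (∑ b, d b) = m + 1 := le_antisymm hd (by omega)
      have hdne : (∑ b, d b) ≠ 0 := by omega
      obtain ⟨a, -, ha⟩ := Finset.exists_ne_zero_of_sum_ne_zero hdne
      -- the reduced recursion, valid for negative powers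
      have rel : ∀ (i j : Fin n) (k : ℤ), k < 0 →
          (d a : ℂ) * (S i j d).coeff (k + 1)
            + ∑ l, p a i l * (S l j d).coeff k
            - ∑ l, (S i l d).coeff k * p a l j = 0 := by
        intro i j k hk
        have M := main a i j d k
        have hsum : ∀ l : Fin n,
            ∑ pr ∈ Finset.HasAntidiagonal.antidiagonal d, (Ω a i l pr.1).coeff 0 * (S l j pr.2).coeff k
              = p a i l * (S l j d).coeff k := by
          intro l
          have hmem : ((0 : Fin r →₀ ℕ), d) ∈ Finset.HasAntidiagonal.antidiagonal d := by
            simp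
          rw [Finset.sum_eq_single_of_mem ((0 : Fin r →₀ ℕ), d) hmem]
          · have hΩ0 : (Ω a i l 0).coeff 0 = p a i l := by
              have := congrArg (fun x : LS => x.coeff 0) (hp a i l)
              simpa [ccA, HahnSeries.C_apply, HahnSeries.coeff_single_same,
                ← MvPowerSeries.coeff_zero_eq_constantCoeff_apply,
                MvPowerSeries.coeff_apply] using this
            rw [hΩ0]
          · intro pr hpr hne
            have hadd : pr.1 + pr.2 = d := Finset.HasAntidiagonal.mem_antidiagonal.mp hpr
            have h1ne : pr.1 ≠ 0 := by
              intro h0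
              apply hne
              have : pr.2 = d := by rw [← hadd, h0, zero_add]
              exact Prod.ext h0 this
            have hdeg : (∑ b, pr.2 b) ≤ m := by
              have hs : (∑ b, pr.1 b) + (∑ b, pr.2 b) = m + 1 := by
                rw [← Finset.sum_add_distrib]
                rw [← hdm]
                exact Finset.sum_congr rfl fun b _ => by
                  rw [← hadd]; rfl
              have hpos : 0 < ∑ b, pr.1 b := by
                rcases Nat.eq_zero_or_pos (∑ b, pr.1 b) with h0 | h0
                · exfalso
                  apply h1ne
                  ext b
                  simpa using (Finset.sum_eq_zero_iff.mp h0) b (Finset.mem_univ b)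
                · exact h0
              omega
            rw [IH pr.2 hdeg l j k hk, mul_zero]
        calc (d a : ℂ) * (S i j d).coeff (k + 1)
              + ∑ l, p a i l * (S l j d).coeff k
              - ∑ l, (S i l d).coeff k * p a l j
            = (d a : ℂ) * (S i j d).coeff (k + 1)
              + ∑ l, ∑ pr ∈ Finset.HasAntidiagonal.antidiagonal d,
                  (Ω a i l pr.1).coeff 0 * (S l j pr.2).coeff k
              - ∑ l, (S i l d).coeff k * p a l j := by
              rw [Finset.sum_congr rfl fun l _ => (hsum l).symm]
          _ = 0 := M
      -- matrix form of the recursion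
      set g : ℤ → Matrix (Fin n) (Fin n) ℂ :=
        fun k => Matrix.of fun i j => (S i j d).coeff k with hg
      have hrec : ∀ k : ℤ, k < 0 → (d a : ℂ) • g (k + 1) = g k * p a - p a * g k := by
        intro k hk
        ext i j
        have hr := rel i j k hk
        simp only [hg, Matrix.smul_apply, Matrix.sub_apply, Matrix.mul_apply,
          Matrix.of_apply, smul_eq_mul]
        linear_combination hr
      -- lower bound below which all coefficients vanish
      have hnN : ∀ ij : Fin n × Fin n, ∃ N : ℤ, ∀ k ≤ N, (S ij.1 ij.2 d).coeff k = 0 := by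
        intro ij
        rcases eq_or_ne (S ij.1 ij.2 d) 0 with h0 | h0
        · exact ⟨0, fun k _ => by rw [h0]; exact HahnSeries.coeff_zero⟩
        · exact ⟨(S ij.1 ij.2 d).order - 1,
            fun k hk => HahnSeries.coeff_eq_zero_of_lt_order (by omega)⟩
      choose Nf hNf using hnN
      haveI : Nonempty (Fin n × Fin n) := ⟨(⟨0, hn⟩, ⟨0, hn⟩)⟩
      set N : ℤ := min (-1) (Finset.univ.inf' Finset.univ_nonempty Nf) with hNdef
      have hN0 : ∀ k ≤ N, g k = 0 := by
        intro k hk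
        ext i j
        simp only [hg, Matrix.of_apply, Matrix.zero_apply]
        refine hNf (i, j) k ?_
        calc k ≤ N := hk
          _ ≤ Finset.univ.inf' Finset.univ_nonempty Nf := min_le_right _ _
          _ ≤ Nf (i, j) := Finset.inf'_le _ (Finset.mem_univ _)
      have hNneg : N < 0 := lt_of_le_of_lt (min_le_left _ _) (by norm_num)
      have hstep : ∀ m : ℕ, N + m < 0 → g (N + m) = 0 := by
        intro m
        induction m with
        | zero => intro _; exact hN0 _ (by omega)
        | succ t IHt =>
          intro hlt
          have hlt' : N + (t : ℤ) < 0 := by push_cast at hlt ⊢; omega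
          have h1 : g (N + t) = 0 := IHt hlt'
          have h2 := hrec (N + t) hlt'
          rw [h1, Matrix.zero_mul, Matrix.mul_zero, sub_zero] at h2
          have h3 : (d a : ℂ) • g (N + ((t : ℕ) + 1 : ℕ)) = 0 := by
            have : (N + (t : ℤ)) + 1 = N + ((t : ℕ) + 1 : ℕ) := by push_cast; ring
            rw [← this]
            exact h2
          have hda : (d a : ℂ) ≠ 0 := Nat.cast_ne_zero.mpr ha
          rcases smul_eq_zero.mp h3 with h | h
          · exact absurd h hda
          · exact h
      have hall : ∀ k : ℤ, k < 0 → g k = 0 := by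
        intro k hk
        rcases le_or_gt k N with h | h
        · exact hN0 k h
        · have hkN : k = N + ((k - N).toNat : ℤ) := by omega
          rw [hkN]
          exact hstep (k - N).toNat (by omega)
      have := congr_fun (congr_fun (hall k hk) i) j
      simpa [hg, Matrix.of_apply] using this
  exact fun i j d k hk => key (∑ b, d b) d le_rfl i j k hk
end
end

section
/- Let S ∈ Mat_n(ℂ[ħ,ħ^{-1}]][[q]]) with S|_{q=0} = Id and let S = S_+·S_− be its Birkhoff factorization, with S_+ ∈ Mat_n(ℂ[ħ][[q]]) and S_− ∈ Mat_n(ℂ[[ħ^{-1}]][[q]]), S_− ≡ Id modulo ħ^{-1}. Let μ ∈ Mat_n(ℂ), let w_1,…,w_r be integers, and set E := 2ħ·∂/∂ħ + Σ_b w_b·θ_b, acting entrywise. If E(S) + μS − Sμ = 0, then also E(S_+) + μS_+ − S_+μ = 0 and E(S_−) + μS_− − S_−μ = 0; i.e. both Birkhoff factors are degree-preserving. -/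
/-!
Work over ℂ.  We represent the coefficient ring `ℂ[ħ,ħ⁻¹]]` (formal Laurent
series `Σ_{k ≤ K} c_k ħ^k` with finitely many positive powers of `ħ`) as
`LaurentSeries ℂ` in the variable `t = ħ⁻¹`; thus the coefficient of `t^k`
is the coefficient of `ħ^{-k}`.  `AA r = ℂ[ħ,ħ⁻¹]][[q¹,…,qʳ]]`, and
`θ_a = qᵃ·∂/∂qᵃ` is the logarithmic partial derivative.
-/

noncomputable section

/-- Diagonal rescaling of a Laurent series: the coefficient of `ħ^{-k}`
is multiplied by `f k`. -/
def scaleL (f : ℤ → ℂ) (x : LS) : LS :=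
  ⟨fun k => f k * x.coeff k,
   x.isPWO_support'.mono (fun k hk => by
     simp only [Function.mem_support, ne_eq] at hk ⊢
     exact fun h => hk (by rw [h, mul_zero]))⟩

/-- Euler operator `E = 2ħ·∂/∂ħ + Σ_b w_b·θ_b`: on the monomial `ħ^j q^d`
(`= t^{-j} q^d`) it acts by multiplication by `2j + Σ_b w_b·d_b`. -/
def eulerA {r : ℕ} (w : Fin r → ℤ) (x : AA r) : AA r :=
  fun d => scaleL (fun k => (((∑ b, w b * (d b : ℤ)) - 2 * k : ℤ) : ℂ)) (x d)

/-- The Euler operator acting entrywise on matrices. -/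
def eulerMat {r n : ℕ} (w : Fin r → ℤ) (M : Matrix (Fin n) (Fin n) (AA r)) :
    Matrix (Fin n) (Fin n) (AA r) :=
  Matrix.of fun i j => eulerA w (M i j)

/-- `(S₊, S₋)` is a Birkhoff factorization of `S`. -/
def IsBirkhoffFactorization {r n : ℕ} (S Sp Sm : Matrix (Fin n) (Fin n) (AA r)) : Prop :=
  MatPolyH Sp ∧ MatRegH Sm ∧
  (∀ i j d, (Sm i j d).coeff 0 =
    MvPowerSeries.coeff (R := ℂ) d ((1 : Matrix (Fin n) (Fin n) (MvPowerSeries (Fin r) ℂ)) i j)) ∧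
  S = Sp * Sm

section AuxLS

/-- Coefficient extraction as an additive monoid hom. -/
def coeffHom (k : ℤ) : LS →+ ℂ where
  toFun x := x.coeff k
  map_zero' := rfl
  map_add' _ _ := rfl

@[simp] lemma coeffHom_apply (k : ℤ) (x : LS) : coeffHom k x = x.coeff k := rfl

lemma coeff_sum {α : Type*} (s : Finset α) (F : α → LS) (k : ℤ) :
    (∑ a ∈ s, F a).coeff k = ∑ a ∈ s, (F a).coeff k :=
  map_sum (coeffHom k) F s

/-- If `u` has no coefficients below `a` and `v` none below `b`, their product
has none below `a + b`. -/
lemma coeff_mul_eq_zero {u v : LS} {a b k : ℤ}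
    (hu : ∀ k' : ℤ, k' < a → u.coeff k' = 0) (hv : ∀ k' : ℤ, k' < b → v.coeff k' = 0)
    (hk : k < a + b) : (u * v).coeff k = 0 := by
  by_contra h
  have hmem : k ∈ (u * v).support := h
  obtain ⟨i, hi, j, hj, hij⟩ := HahnSeries.support_mul_subset hmem
  have hij' : i + j = k := hij
  have hia : a ≤ i := by by_contra h'; exact hi (hu i (by omega))
  have hjb : b ≤ j := by by_contra h'; exact hj (hv j (by omega))
  omega

end AuxLS

section AuxScale

@[simp] lemma scaleL_coeff (f : ℤ → ℂ) (x : LS) (k : ℤ) :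
    (scaleL f x).coeff k = f k * x.coeff k := rfl

lemma scaleL_support (f : ℤ → ℂ) (x : LS) : (scaleL f x).support ⊆ x.support := by
  intro k hk
  simp only [HahnSeries.mem_support, scaleL_coeff, ne_eq] at hk ⊢
  exact fun h => hk (by rw [h, mul_zero])

lemma scaleL_add (f : ℤ → ℂ) (x y : LS) :
    scaleL f (x + y) = scaleL f x + scaleL f y := by
  ext k; simp [mul_add]

/-- The key Leibniz identity for diagonal scalings with additive weights. -/
lemma scaleL_mul_coeff (f g : ℤ → ℂ) (u v : LS) (k : ℤ) (c : ℂ)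
    (h : ∀ i j : ℤ, i + j = k → f i + g j = c) :
    (scaleL f u * v).coeff k + (u * scaleL g v).coeff k = c * (u * v).coeff k := by
  rw [HahnSeries.coeff_mul_left' u.isPWO_support (scaleL_support f u),
      HahnSeries.coeff_mul_right' v.isPWO_support (scaleL_support g v),
      HahnSeries.coeff_mul, ← Finset.sum_add_distrib, Finset.mul_sum]
  refine Finset.sum_congr rfl ?_
  intro ij hij
  rw [Finset.mem_antidiagonal] at hij
  rw [scaleL_coeff, scaleL_coeff, ← h ij.1 ij.2 hij.2.2]
  ring

end AuxScale

section AuxEuler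

variable {r : ℕ}

lemma eulerA_apply (w : Fin r → ℤ) (x : AA r) (d : Fin r →₀ ℕ) :
    eulerA w x d = scaleL (fun k => (((∑ b, w b * (d b : ℤ)) - 2 * k : ℤ) : ℂ)) (x d) := rfl

lemma coeffA (x : AA r) (d : Fin r →₀ ℕ) : MvPowerSeries.coeff d x = x d := rfl

lemma eulerA_add (w : Fin r → ℤ) (x y : AA r) :
    eulerA w (x + y) = eulerA w x + eulerA w y := by
  funext d
  have : (x + y) d = x d + y d := rfl
  simp only [eulerA_apply, this, scaleL_add]
  rfl

/-- `eulerA` as an additive monoid hom. -/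
def eulerHom (w : Fin r → ℤ) : AA r →+ AA r where
  toFun := eulerA w
  map_zero' := by
    funext d
    ext k
    simp [eulerA_apply, show (0 : AA r) d = 0 from rfl]
  map_add' := eulerA_add w

lemma eulerA_sum {α : Type*} (w : Fin r → ℤ) (s : Finset α) (F : α → AA r) :
    eulerA w (∑ a ∈ s, F a) = ∑ a ∈ s, eulerA w (F a) :=
  map_sum (eulerHom w) F s

/-- Leibniz rule for the Euler operator. -/
lemma eulerA_mul (w : Fin r → ℤ) (x y : AA r) :
    eulerA w (x * y) = eulerA w x * y + x * eulerA w y := by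
  funext d
  ext k
  classical
  have hxy : (x * y) d = ∑ p ∈ Finset.HasAntidiagonal.antidiagonal d, x p.1 * y p.2 :=
    MvPowerSeries.coeff_mul d x y
  have hr1 : (eulerA w x * y) d = ∑ p ∈ Finset.HasAntidiagonal.antidiagonal d, eulerA w x p.1 * y p.2 :=
    MvPowerSeries.coeff_mul d (eulerA w x) y
  have hr2 : (x * eulerA w y) d = ∑ p ∈ Finset.HasAntidiagonal.antidiagonal d, x p.1 * eulerA w y p.2 :=
    MvPowerSeries.coeff_mul d x (eulerA w y)
  have hadd : ((eulerA w x * y + x * eulerA w y) d).coeff k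
      = ((eulerA w x * y) d).coeff k + ((x * eulerA w y) d).coeff k := rfl
  rw [hadd, hr1, hr2, eulerA_apply, hxy, scaleL_coeff, coeff_sum, coeff_sum, coeff_sum,
    ← Finset.sum_add_distrib, Finset.mul_sum]
  refine (Finset.sum_congr rfl ?_).symm
  intro p hp
  rw [Finset.HasAntidiagonal.mem_antidiagonal] at hp
  rw [eulerA_apply, eulerA_apply]
  refine scaleL_mul_coeff _ _ _ _ _ _ ?_
  intro i j hij
  have hsum : (∑ b, w b * (p.1 b : ℤ)) + (∑ b, w b * (p.2 b : ℤ)) = ∑ b, w b * (d b : ℤ) := by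
    rw [← Finset.sum_add_distrib]
    refine Finset.sum_congr rfl fun b _ => ?_
    have hd : d b = p.1 b + p.2 b := by rw [← hp]; rfl
    rw [hd]; push_cast; ring
  rw [← Int.cast_add]
  exact congrArg Int.cast (by rw [← hsum, ← hij]; ring)

end AuxEuler

section AuxMat

variable {r n : ℕ}

lemma eulerMat_mul (w : Fin r → ℤ) (P Q : Matrix (Fin n) (Fin n) (AA r)) :
    eulerMat w (P * Q) = eulerMat w P * Q + P * eulerMat w Q := by
  refine Matrix.ext fun i j => ?_
  show eulerA w ((P * Q) i j) = (eulerMat w P * Q) i j + (P * eulerMat w Q) i j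
  rw [Matrix.mul_apply, Matrix.mul_apply, Matrix.mul_apply, eulerA_sum,
    ← Finset.sum_add_distrib]
  exact Finset.sum_congr rfl fun l _ => eulerA_mul w (P i l) (Q l j)

/-- Upper-bound version: if `u` vanishes above `a` and `v` above `b`, the
product vanishes above `a + b`. -/
lemma coeff_mul_eq_zero' {u v : LS} {a b k : ℤ}
    (hu : ∀ k' : ℤ, a < k' → u.coeff k' = 0) (hv : ∀ k' : ℤ, b < k' → v.coeff k' = 0)
    (hk : a + b < k) : (u * v).coeff k = 0 := by
  by_contra h
  obtain ⟨i, hi, j, hj, hij⟩ := HahnSeries.support_mul_subset (h : k ∈ (u*v).support)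
  have hij' : i + j = k := hij
  have hia : i ≤ a := by by_contra h'; exact hi (hu i (by omega))
  have hjb : j ≤ b := by by_contra h'; exact hj (hv j (by omega))
  omega

lemma isPolyH_add {u v : LS} (hu : isPolyH u) (hv : isPolyH v) : isPolyH (u + v) := by
  intro k hk
  show u.coeff k + v.coeff k = 0
  rw [hu k hk, hv k hk, add_zero]

lemma isPolyH_neg {u : LS} (hu : isPolyH u) : isPolyH (-u) := by
  intro k hk
  show -(u.coeff k) = 0
  rw [hu k hk, neg_zero]

lemma isPolyH_sub {u v : LS} (hu : isPolyH u) (hv : isPolyH v) : isPolyH (u - v) := by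
  have : u - v = u + -v := sub_eq_add_neg u v
  rw [this]; exact isPolyH_add hu (isPolyH_neg hv)

lemma isPolyH_mul {u v : LS} (hu : isPolyH u) (hv : isPolyH v) : isPolyH (u * v) := by
  intro k hk
  exact coeff_mul_eq_zero' (a := 0) (b := 0) (fun k' h => hu k' h) (fun k' h => hv k' h)
    (by omega)

lemma isPolyH_sum {α : Type*} {s : Finset α} {F : α → LS}
    (h : ∀ a ∈ s, isPolyH (F a)) : isPolyH (∑ a ∈ s, F a) := by
  intro k hk
  rw [coeff_sum]
  exact Finset.sum_eq_zero fun a ha => h a ha k hk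

lemma isRegH_add {u v : LS} (hu : isRegH u) (hv : isRegH v) : isRegH (u + v) := by
  intro k hk
  show u.coeff k + v.coeff k = 0
  rw [hu k hk, hv k hk, add_zero]

lemma isRegH_neg {u : LS} (hu : isRegH u) : isRegH (-u) := by
  intro k hk
  show -(u.coeff k) = 0
  rw [hu k hk, neg_zero]

lemma isRegH_sub {u v : LS} (hu : isRegH u) (hv : isRegH v) : isRegH (u - v) := by
  rw [sub_eq_add_neg]; exact isRegH_add hu (isRegH_neg hv)

lemma isRegH_mul {u v : LS} (hu : isRegH u) (hv : isRegH v) : isRegH (u * v) := by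
  intro k hk
  exact coeff_mul_eq_zero (a := 0) (b := 0) (fun k' h => hu k' h) (fun k' h => hv k' h)
    (by omega)

lemma isRegH_sum {α : Type*} {s : Finset α} {F : α → LS}
    (h : ∀ a ∈ s, isRegH (F a)) : isRegH (∑ a ∈ s, F a) := by
  intro k hk
  rw [coeff_sum]
  exact Finset.sum_eq_zero fun a ha => h a ha k hk

lemma isPolyH_euler (w : Fin r → ℤ) {x : AA r} {d : Fin r →₀ ℕ}
    (h : isPolyH (x d)) : isPolyH (eulerA w x d) := by
  intro k hk
  rw [eulerA_apply, scaleL_coeff, h k hk, mul_zero]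

lemma isRegH_euler (w : Fin r → ℤ) {x : AA r} {d : Fin r →₀ ℕ}
    (h : isRegH (x d)) : isRegH (eulerA w x d) := by
  intro k hk
  rw [eulerA_apply, scaleL_coeff, h k hk, mul_zero]

end AuxMat

section AuxQ0

variable {n : ℕ}

/-- Coefficientwise form of matrix entries of `1` over `LS`. -/
lemma one_entry_coeff (i j : Fin n) (k : ℤ) :
    ((1 : Matrix (Fin n) (Fin n) LS) i j).coeff k =
      if i = j ∧ k = 0 then 1 else 0 := by
  rcases eq_or_ne i j with h | h
  · subst h
    rw [Matrix.one_apply_eq]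
    rcases eq_or_ne k 0 with hk | hk
    · subst hk; simp [HahnSeries.coeff_one]
    · simp [HahnSeries.coeff_one, hk]
  · rw [Matrix.one_apply_ne h]
    simp [h]

/-- Birkhoff uniqueness at `q = 0`: if `A` has polynomial entries, `B` is
regular with `B ≡ 1 (mod t)`, and `A * B = 1`, then `A = 1` and `B = 1`. -/
lemma birkhoff_q0 (hn : 1 ≤ n) (A B : Matrix (Fin n) (Fin n) LS)
    (hAB : A * B = 1)
    (hA : ∀ i j, isPolyH (A i j))
    (hB0 : ∀ i j, (B i j).coeff 0 = if i = j then 1 else 0)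
    (hBreg : ∀ i j, isRegH (B i j)) : A = 1 ∧ B = 1 := by
  classical
  set N : Matrix (Fin n) (Fin n) LS := B - 1 with hN
  have hNcoeff : ∀ i j, ∀ k : ℤ, k < 1 → (N i j).coeff k = 0 := by
    intro i j k hk
    have : (N i j).coeff k = (B i j).coeff k - ((1 : Matrix (Fin n) (Fin n) LS) i j).coeff k := by
      rw [hN]; rfl
    rw [this, one_entry_coeff]
    rcases eq_or_ne k 0 with rfl | hk0
    · rw [hB0]
      by_cases hij : i = j <;> simp [hij]
    · rw [hBreg i j k (by omega), if_neg (by tauto), sub_zero]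
  have hAN : A = 1 - A * N := by
    rw [hN, Matrix.mul_sub, hAB, Matrix.mul_one]
    abel
  -- the minimal order over all entries
  have hne : (Finset.univ : Finset (Fin n × Fin n)).Nonempty := by
    refine ⟨(⟨0, by omega⟩, ⟨0, by omega⟩), Finset.mem_univ _⟩
  set m : ℤ := Finset.inf' Finset.univ hne (fun p => (A p.1 p.2).order) with hm
  have hmle : ∀ i j (k : ℤ), k < m → (A i j).coeff k = 0 := by
    intro i j k hk
    by_contra h
    have h0 : A i j ≠ 0 := by intro h0; rw [h0] at h; exact h rfl
    have := HahnSeries.order_le_of_coeff_ne_zero h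
    have : m ≤ (A i j).order := Finset.inf'_le _ (Finset.mem_univ (i, j))
    omega
  have hm0 : 0 ≤ m := by
    by_contra hmneg
    push_neg at hmneg
    obtain ⟨p, _, hp⟩ := Finset.exists_mem_eq_inf' hne (fun p => (A p.1 p.2).order)
    have hApne : A p.1 p.2 ≠ 0 := by
      intro h0
      rw [h0] at hp
      simp [HahnSeries.order_zero] at hp
      omega
    have hAcoeff : (A p.1 p.2).coeff m ≠ 0 := by
      rw [hm, hp]; exact mt HahnSeries.coeff_order_eq_zero.mp hApne
    apply hAcoeff
    have hEq : (A p.1 p.2).coeff m = ((1 : Matrix (Fin n) (Fin n) LS) p.1 p.2).coeff m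
        - ((A * N) p.1 p.2).coeff m := by
      conv_lhs => rw [hAN]
      rfl
    rw [hEq, one_entry_coeff, if_neg (by omega : ¬(p.1 = p.2 ∧ m = 0))]
    have : ((A * N) p.1 p.2).coeff m = 0 := by
      rw [Matrix.mul_apply, coeff_sum]
      refine Finset.sum_eq_zero fun l _ => ?_
      exact coeff_mul_eq_zero (a := m) (b := 1) (fun k' hk' => hmle p.1 l k' hk')
        (fun k' hk' => hNcoeff l p.2 k' hk') (by omega)
    rw [this, sub_zero]
  -- so entries of A are supported at k = 0 and below... in fact only at 0
  have hA0 : ∀ i j, (A i j).coeff 0 = if i = j then 1 else 0 := by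
    intro i j
    have hEq : (A i j).coeff 0 = ((1 : Matrix (Fin n) (Fin n) LS) i j).coeff 0
        - ((A * N) i j).coeff 0 := by
      conv_lhs => rw [hAN]
      rfl
    have hzero : ((A * N) i j).coeff 0 = 0 := by
      rw [Matrix.mul_apply, coeff_sum]
      refine Finset.sum_eq_zero fun l _ => ?_
      refine coeff_mul_eq_zero (a := 0) (b := 1) ?_ (fun k' hk' => hNcoeff l j k' hk') (by omega)
      intro k' hk'
      exact hmle i l k' (by omega)
    rw [hEq, hzero, one_entry_coeff, sub_zero]
    by_cases hij : i = j <;> simp [hij]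
  have hAeq : A = 1 := by
    refine Matrix.ext fun i j => ?_
    ext k
    rw [one_entry_coeff]
    rcases lt_trichotomy k 0 with hk | hk | hk
    · rw [hmle i j k (by omega), if_neg (by omega : ¬(i = j ∧ k = 0))]
    · subst hk
      rw [hA0]
      by_cases hij : i = j <;> simp [hij]
    · rw [hA i j k hk, if_neg (by omega : ¬(i = j ∧ k = 0))]
  refine ⟨hAeq, ?_⟩
  rw [hAeq, Matrix.one_mul] at hAB
  exact hAB

end AuxQ0

section AuxMore

variable {r n : ℕ}

lemma coeffA_add (x y : AA r) (d : Fin r →₀ ℕ) : (x + y) d = x d + y d := rfl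

lemma coeffA_sub (x y : AA r) (d : Fin r →₀ ℕ) : (x - y) d = x d - y d := rfl

lemma coeffA_neg (x : AA r) (d : Fin r →₀ ℕ) : (-x) d = -(x d) := rfl

lemma coeffA_sum {α : Type*} (s : Finset α) (F : α → AA r) (d : Fin r →₀ ℕ) :
    (∑ a ∈ s, F a) d = ∑ a ∈ s, F a d :=
  map_sum (MvPowerSeries.coeff (R := LS) d) F s

lemma isPolyH_matmul {P Q : Matrix (Fin n) (Fin n) (AA r)}
    (hP : ∀ i j d, isPolyH (P i j d)) (hQ : ∀ i j d, isPolyH (Q i j d)) :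
    ∀ i j d, isPolyH ((P * Q) i j d) := by
  intro i j d
  classical
  rw [Matrix.mul_apply, coeffA_sum]
  refine isPolyH_sum fun l _ => ?_
  have hc : (P i l * Q l j) d = ∑ p ∈ Finset.HasAntidiagonal.antidiagonal d, P i l p.1 * Q l j p.2 :=
    MvPowerSeries.coeff_mul d (P i l) (Q l j)
  rw [hc]
  exact isPolyH_sum fun p _ => isPolyH_mul (hP i l p.1) (hQ l j p.2)

lemma isRegH_matmul {P Q : Matrix (Fin n) (Fin n) (AA r)}
    (hP : ∀ i j d, isRegH (P i j d)) (hQ : ∀ i j d, isRegH (Q i j d)) :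
    ∀ i j d, isRegH ((P * Q) i j d) := by
  intro i j d
  classical
  rw [Matrix.mul_apply, coeffA_sum]
  refine isRegH_sum fun l _ => ?_
  have hc : (P i l * Q l j) d = ∑ p ∈ Finset.HasAntidiagonal.antidiagonal d, P i l p.1 * Q l j p.2 :=
    MvPowerSeries.coeff_mul d (P i l) (Q l j)
  rw [hc]
  exact isRegH_sum fun p _ => isRegH_mul (hP i l p.1) (hQ l j p.2)

/-- A Hahn series concentrated in degree `0` multiplies coefficientwise at `0`. -/
lemma constH_mul_coeff0 {u : LS} (hu : ∀ k : ℤ, k ≠ 0 → u.coeff k = 0) (v : LS) :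
    (u * v).coeff 0 = u.coeff 0 * v.coeff 0 := by
  have h : u = HahnSeries.single 0 (u.coeff 0) := by
    ext k
    rcases eq_or_ne k 0 with rfl | hk
    · rw [HahnSeries.coeff_single_same]
    · rw [hu k hk, HahnSeries.coeff_single_of_ne hk]
  conv_lhs => rw [h]
  rw [HahnSeries.coeff_single_zero_mul]

end AuxMore

/-- **The Birkhoff factors of a degree-preserving matrix are degree-preserving**
(key step of the graded canonical frame Theorem).  If `S|_{q=0} = Id`,
`S = S₊·S₋` is the Birkhoff factorization, and `E(S) + [μ, S] = 0` for the
Euler operator `E = 2ħ∂/∂ħ + Σ_b w_b θ_b` and `μ ∈ Mat_n(ℂ)`, then also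
`E(S₊) + [μ, S₊] = 0` and `E(S₋) + [μ, S₋] = 0`. -/
theorem birkhoff_factors_graded {r n : ℕ} (hr : 1 ≤ r) (hn : 1 ≤ n)
    (S Sp Sm : Matrix (Fin n) (Fin n) (AA r))
    (hScc : S.map ccA = 1)
    (hfact : IsBirkhoffFactorization S Sp Sm)
    (μ : Matrix (Fin n) (Fin n) ℂ) (w : Fin r → ℤ)
    (hgrade : eulerMat w S + μ.map (cA r) * S - S * μ.map (cA r) = 0) :
    eulerMat w Sp + μ.map (cA r) * Sp - Sp * μ.map (cA r) = 0 ∧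
    eulerMat w Sm + μ.map (cA r) * Sm - Sm * μ.map (cA r) = 0 := by
  classical
  obtain ⟨hSp, hSm, hSm0, hS⟩ := hfact
  subst hS
  set μ' : Matrix (Fin n) (Fin n) (AA r) := μ.map (cA r) with hμ'
  -- entries of μ'
  have hmu : ∀ (i j : Fin n) (d : Fin r →₀ ℕ),
      μ' i j d = if d = 0 then HahnSeries.single 0 (μ i j) else 0 := by
    intro i j d
    have h := MvPowerSeries.coeff_C (σ := Fin r) d (HahnSeries.C (μ i j) : LS)
    rw [HahnSeries.C_apply] at h
    exact h
  have hmu_poly : ∀ (i j : Fin n) (d : Fin r →₀ ℕ), isPolyH (μ' i j d) := by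
    intro i j d k hk
    rw [hmu]
    split
    · exact HahnSeries.coeff_single_of_ne (by omega)
    · rfl
  have hmu_reg : ∀ (i j : Fin n) (d : Fin r →₀ ℕ), isRegH (μ' i j d) := by
    intro i j d k hk
    rw [hmu]
    split
    · exact HahnSeries.coeff_single_of_ne (by omega)
    · rfl
  -- coefficient normalization of Sm
  have hSm00 : ∀ (i j : Fin n) (d : Fin r →₀ ℕ),
      (Sm i j d).coeff 0 = if i = j ∧ d = 0 then 1 else 0 := by
    intro i j d
    rw [hSm0 i j d]
    rcases eq_or_ne i j with rfl | hij
    · rw [Matrix.one_apply_eq, MvPowerSeries.coeff_one]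
      by_cases hd : d = 0 <;> simp [hd]
    · rw [Matrix.one_apply_ne hij, map_zero, if_neg (by tauto)]
  -- Step 1: the Birkhoff factors are normalized at q = 0
  have hAB : (Sp.map ccA) * (Sm.map ccA) = 1 := by
    rw [← Matrix.map_mul, hScc]
  have hq0 := birkhoff_q0 hn (Sp.map ccA) (Sm.map ccA) hAB
    (fun i j => hSp i j 0)
    (by
      intro i j
      show (Sm i j 0).coeff 0 = _
      rw [hSm00]
      by_cases hij : i = j <;> simp [hij])
    (fun i j => hSm i j 0)
  have hSp0 : ∀ i l : Fin n, Sp i l 0 = ((1 : Matrix (Fin n) (Fin n) LS) i l) := by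
    intro i l
    have := congrArg (fun M : Matrix (Fin n) (Fin n) LS => M i l) hq0.1
    exact this
  have hSm0' : ∀ l j : Fin n, Sm l j 0 = ((1 : Matrix (Fin n) (Fin n) LS) l j) := by
    intro l j
    have := congrArg (fun M : Matrix (Fin n) (Fin n) LS => M l j) hq0.2
    exact this
  -- Step 2: derivation identity
  set G := eulerMat w Sp + μ' * Sp - Sp * μ' with hG
  set K := eulerMat w Sm + μ' * Sm - Sm * μ' with hK
  have hGK : G * Sm + Sp * K = 0 := by
    have h1 : eulerMat w (Sp * Sm) = eulerMat w Sp * Sm + Sp * eulerMat w Sm :=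
      eulerMat_mul w Sp Sm
    have h2 : G * Sm + Sp * K = eulerMat w (Sp * Sm) + μ' * (Sp * Sm) - (Sp * Sm) * μ' := by
      rw [h1, hG, hK]
      simp only [Matrix.add_mul, Matrix.sub_mul, Matrix.mul_add, Matrix.mul_sub,
        Matrix.mul_assoc]
      abel
    rw [h2]
    exact hgrade
  -- Step 3: Sp is invertible
  have hdet : IsUnit Sp.det := by
    have hcc : ccA Sp.det = 1 := by
      rw [RingHom.map_det, RingHom.mapMatrix_apply, hq0.1, Matrix.det_one]
    exact IsUnit.of_mul_eq_one (MvPowerSeries.invOfUnit Sp.det 1)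
      (MvPowerSeries.mul_invOfUnit Sp.det 1 (by rw [show ((1 : LSˣ) : LS) = 1 from rfl]; exact hcc))
  obtain ⟨U, hU⟩ := (Matrix.isUnit_iff_isUnit_det Sp).mpr hdet
  set X := (↑U⁻¹ : Matrix (Fin n) (Fin n) (AA r)) * G with hX
  have hSpX : Sp * X = G := by
    rw [hX, ← hU, Units.mul_inv_cancel_left]
  have hXSm : X * Sm = -K := by
    have h2 : Sp * (X * Sm + K) = 0 := by
      rw [Matrix.mul_add, ← Matrix.mul_assoc, hSpX, hGK]
    have h3 : X * Sm + K = 0 := by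
      have := congrArg (fun M => (↑U⁻¹ : Matrix (Fin n) (Fin n) (AA r)) * M) h2
      simpa [← hU, ← Matrix.mul_assoc, Units.inv_mul_cancel_left] using this
    linear_combination (norm := noncomm_ring) h3
  -- Step 4: G is polynomial, K is regular
  have hGpoly : ∀ (i j : Fin n) (d : Fin r →₀ ℕ), isPolyH (G i j d) := by
    intro i j d
    have h1 : G i j d = eulerA w (Sp i j) d + ((μ' * Sp) i j d - (Sp * μ') i j d) := by
      rw [hG, Matrix.sub_apply, Matrix.add_apply, coeffA_sub, coeffA_add]
      show eulerA w (Sp i j) d + (μ' * Sp) i j d - (Sp * μ') i j d = _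
      ring
    rw [h1]
    exact isPolyH_add (isPolyH_euler w (hSp i j d))
      (isPolyH_sub (isPolyH_matmul hmu_poly hSp i j d) (isPolyH_matmul hSp hmu_poly i j d))
  have hKreg : ∀ (i j : Fin n) (d : Fin r →₀ ℕ), isRegH (K i j d) := by
    intro i j d
    have h1 : K i j d = eulerA w (Sm i j) d + ((μ' * Sm) i j d - (Sm * μ') i j d) := by
      rw [hK, Matrix.sub_apply, Matrix.add_apply, coeffA_sub, coeffA_add]
      show eulerA w (Sm i j) d + (μ' * Sm) i j d - (Sm * μ') i j d = _
      ring
    rw [h1]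
    exact isRegH_add (isRegH_euler w (hSm i j d))
      (isRegH_sub (isRegH_matmul hmu_reg hSm i j d) (isRegH_matmul hSm hmu_reg i j d))
  -- Extraction identities
  have hmemL : ∀ d : Fin r →₀ ℕ, ((0 : Fin r →₀ ℕ), d) ∈ Finset.HasAntidiagonal.antidiagonal d := by
    intro d; rw [Finset.HasAntidiagonal.mem_antidiagonal, zero_add]
  have hmemR : ∀ d : Fin r →₀ ℕ, (d, (0 : Fin r →₀ ℕ)) ∈ Finset.HasAntidiagonal.antidiagonal d := by
    intro d; rw [Finset.HasAntidiagonal.mem_antidiagonal, add_zero]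
  have hXeqL : ∀ (d : Fin r →₀ ℕ) (i j : Fin n), X i j d = G i j d -
      ∑ l, ∑ p ∈ (Finset.HasAntidiagonal.antidiagonal d).erase ((0 : Fin r →₀ ℕ), d),
        Sp i l p.1 * X l j p.2 := by
    intro d i j
    have h1 : G i j d = ∑ l, (Sp i l * X l j) d := by
      rw [← hSpX, Matrix.mul_apply, coeffA_sum]
    have h2 : ∀ l, (Sp i l * X l j) d
        = Sp i l 0 * X l j d + ∑ p ∈ (Finset.HasAntidiagonal.antidiagonal d).erase ((0 : Fin r →₀ ℕ), d),
            Sp i l p.1 * X l j p.2 := by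
      intro l
      have hc : (Sp i l * X l j) d = ∑ p ∈ Finset.HasAntidiagonal.antidiagonal d, Sp i l p.1 * X l j p.2 :=
        MvPowerSeries.coeff_mul d (Sp i l) (X l j)
      rw [hc, ← Finset.add_sum_erase _ _ (hmemL d)]
    have h3 : ∑ l, Sp i l 0 * X l j d = X i j d := by
      have : ∀ l, Sp i l 0 * X l j d
          = if i = l then X l j d else 0 := by
        intro l
        rw [hSp0 i l, Matrix.one_apply]
        split <;> simp
      rw [Finset.sum_congr rfl fun l _ => this l, Finset.sum_ite_eq _ i _]
      simp
    rw [h1, Finset.sum_congr rfl fun l _ => h2 l, Finset.sum_add_distrib, h3]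
    ring
  have hXeqR : ∀ (d : Fin r →₀ ℕ) (i j : Fin n), X i j d = -(K i j d) -
      ∑ l, ∑ p ∈ (Finset.HasAntidiagonal.antidiagonal d).erase (d, (0 : Fin r →₀ ℕ)),
        X i l p.1 * Sm l j p.2 := by
    intro d i j
    have h1 : -(K i j d) = ∑ l, (X i l * Sm l j) d := by
      have h0 : (X * Sm) i j d = (-K) i j d := by rw [hXSm]
      rw [Matrix.neg_apply, coeffA_neg] at h0
      rw [← h0, Matrix.mul_apply, coeffA_sum]
    have h2 : ∀ l, (X i l * Sm l j) d
        = X i l d * Sm l j 0 + ∑ p ∈ (Finset.HasAntidiagonal.antidiagonal d).erase (d, (0 : Fin r →₀ ℕ)),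
            X i l p.1 * Sm l j p.2 := by
      intro l
      have hc : (X i l * Sm l j) d = ∑ p ∈ Finset.HasAntidiagonal.antidiagonal d, X i l p.1 * Sm l j p.2 :=
        MvPowerSeries.coeff_mul d (X i l) (Sm l j)
      rw [hc, ← Finset.add_sum_erase _ _ (hmemR d)]
    have h3 : ∑ l, X i l d * Sm l j 0 = X i j d := by
      have : ∀ l, X i l d * Sm l j 0 = if l = j then X i l d else 0 := by
        intro l
        rw [hSm0' l j, Matrix.one_apply]
        split <;> simp
      rw [Finset.sum_congr rfl fun l _ => this l, Finset.sum_ite_eq' _ j _]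
      simp
    rw [h1, Finset.sum_congr rfl fun l _ => h2 l, Finset.sum_add_distrib, h3]
    ring
  -- membership facts for the erased antidiagonals
  have hltL : ∀ (d : Fin r →₀ ℕ) (p : (Fin r →₀ ℕ) × (Fin r →₀ ℕ)),
      p ∈ (Finset.HasAntidiagonal.antidiagonal d).erase ((0 : Fin r →₀ ℕ), d) → p.2 < d := by
    intro d p hp
    obtain ⟨hne, hpd⟩ := Finset.mem_erase.mp hp
    rw [Finset.HasAntidiagonal.mem_antidiagonal] at hpd
    have h2 : p.2 ≤ d := by rw [← hpd]; exact le_add_self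
    refine lt_of_le_of_ne h2 fun h => hne ?_
    have h1 : p.1 = 0 := by
      have := hpd
      rw [h] at this
      exact add_right_cancel (by rw [this, zero_add])
    exact Prod.ext h1 h
  have hltR : ∀ (d : Fin r →₀ ℕ) (p : (Fin r →₀ ℕ) × (Fin r →₀ ℕ)),
      p ∈ (Finset.HasAntidiagonal.antidiagonal d).erase (d, (0 : Fin r →₀ ℕ)) → p.1 < d := by
    intro d p hp
    obtain ⟨hne, hpd⟩ := Finset.mem_erase.mp hp
    rw [Finset.HasAntidiagonal.mem_antidiagonal] at hpd
    have h2 : p.1 ≤ d := by rw [← hpd]; exact le_self_add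
    refine lt_of_le_of_ne h2 fun h => hne ?_
    have h1 : p.2 = 0 := by
      have := hpd
      rw [h] at this
      exact add_left_cancel (by rw [this, add_zero])
    exact Prod.ext h h1
  -- Step 5: X is both polynomial and regular
  have hXboth : ∀ (d : Fin r →₀ ℕ) (i j : Fin n),
      isPolyH (X i j d) ∧ isRegH (X i j d) := by
    intro d
    induction d using WellFoundedLT.induction with
    | _ d IH =>
      intro i j
      constructor
      · rw [hXeqL d i j]
        refine isPolyH_sub (hGpoly i j d) (isPolyH_sum fun l _ => isPolyH_sum fun p hp =>
          isPolyH_mul (hSp i l p.1) ((IH p.2 (hltL d p hp) l j).1))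
      · rw [hXeqR d i j]
        refine isRegH_sub (isRegH_neg (hKreg i j d)) (isRegH_sum fun l _ => isRegH_sum fun p hp =>
          isRegH_mul ((IH p.1 (hltR d p hp) i l).2) (hSm l j p.2))
  have hXconst : ∀ (i j : Fin n) (d : Fin r →₀ ℕ) (k : ℤ), k ≠ 0 → (X i j d).coeff k = 0 := by
    intro i j d k hk
    rcases lt_trichotomy k 0 with h | h | h
    · exact (hXboth d i j).2 k h
    · exact absurd h hk
    · exact (hXboth d i j).1 k h
  -- Step 6: the constant (in ħ) part of K vanishes
  have hK0 : ∀ (i j : Fin n) (d : Fin r →₀ ℕ), (K i j d).coeff 0 = 0 := by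
    intro i j d
    have h1 : (K i j d).coeff 0 = (eulerA w (Sm i j) d).coeff 0
        + (((μ' * Sm) i j d).coeff 0 - ((Sm * μ') i j d).coeff 0) := by
      rw [hK, Matrix.sub_apply, Matrix.add_apply, coeffA_sub, coeffA_add,
        HahnSeries.coeff_sub, HahnSeries.coeff_add,
        show eulerMat w Sm i j = eulerA w (Sm i j) from rfl]
      ring
    have hEu : (eulerA w (Sm i j) d).coeff 0 = 0 := by
      rw [eulerA_apply, scaleL_coeff, hSm00]
      rcases eq_or_ne d 0 with rfl | hd
      · simp
      · rw [if_neg (by tauto)]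
        simp
    have hL : ((μ' * Sm) i j d).coeff 0 = if d = 0 then μ i j else 0 := by
      rw [Matrix.mul_apply, coeffA_sum, coeff_sum]
      have hterm : ∀ l, ((μ' i l * Sm l j) d).coeff 0
          = if l = j ∧ d = 0 then μ i l else 0 := by
        intro l
        have hc : (μ' i l * Sm l j) d = ∑ p ∈ Finset.HasAntidiagonal.antidiagonal d, μ' i l p.1 * Sm l j p.2 :=
          MvPowerSeries.coeff_mul d (μ' i l) (Sm l j)
        rw [hc, coeff_sum]
        have hterm2 : ∀ p ∈ Finset.HasAntidiagonal.antidiagonal d, (μ' i l p.1 * Sm l j p.2).coeff 0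
            = if p.1 = 0 ∧ l = j ∧ p.2 = 0 then μ i l else 0 := by
          intro p hp
          rw [hmu]
          rcases eq_or_ne p.1 0 with h1 | h1
          · rw [if_pos h1, HahnSeries.coeff_single_zero_mul, hSm00]
            by_cases h2 : l = j ∧ p.2 = 0
            · rw [if_pos h2, if_pos ⟨h1, h2⟩, mul_one]
            · rw [if_neg h2, if_neg (by tauto), mul_zero]
          · rw [if_neg h1, zero_mul, if_neg (by tauto)]
            rfl
        rw [Finset.sum_congr rfl hterm2]
        rcases eq_or_ne d 0 with rfl | hd
        · rw [Finsupp.antidiagonal_zero, Finset.sum_singleton]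
          by_cases hlj : l = j <;> simp [hlj]
        · rw [if_neg (by tauto)]
          refine Finset.sum_eq_zero fun p hp => ?_
          rw [Finset.HasAntidiagonal.mem_antidiagonal] at hp
          have : ¬(p.1 = 0 ∧ l = j ∧ p.2 = 0) := by
            rintro ⟨ha, -, hb⟩
            exact hd (by rw [← hp, ha, hb, add_zero])
          rw [if_neg this]
      rw [Finset.sum_congr rfl fun l _ => hterm l]
      rcases eq_or_ne d 0 with rfl | hd
      · simp
      · simp [hd]
    have hR : ((Sm * μ') i j d).coeff 0 = if d = 0 then μ i j else 0 := by
      rw [Matrix.mul_apply, coeffA_sum, coeff_sum]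
      have hterm : ∀ l, ((Sm i l * μ' l j) d).coeff 0
          = if i = l ∧ d = 0 then μ l j else 0 := by
        intro l
        have hc : (Sm i l * μ' l j) d = ∑ p ∈ Finset.HasAntidiagonal.antidiagonal d, Sm i l p.1 * μ' l j p.2 :=
          MvPowerSeries.coeff_mul d (Sm i l) (μ' l j)
        rw [hc, coeff_sum]
        have hterm2 : ∀ p ∈ Finset.HasAntidiagonal.antidiagonal d, (Sm i l p.1 * μ' l j p.2).coeff 0
            = if p.2 = 0 ∧ i = l ∧ p.1 = 0 then μ l j else 0 := by
          intro p hp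
          rw [hmu]
          rcases eq_or_ne p.2 0 with h1 | h1
          · rw [if_pos h1, HahnSeries.coeff_mul_single_zero, hSm00]
            by_cases h2 : i = l ∧ p.1 = 0
            · rw [if_pos h2, if_pos ⟨h1, h2⟩, one_mul]
            · rw [if_neg h2, if_neg (by tauto), zero_mul]
          · rw [if_neg h1, mul_zero, if_neg (by tauto)]
            rfl
        rw [Finset.sum_congr rfl hterm2]
        rcases eq_or_ne d 0 with rfl | hd
        · rw [Finsupp.antidiagonal_zero, Finset.sum_singleton]
          by_cases hil : i = l <;> simp [hil]
        · rw [if_neg (by tauto)]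
          refine Finset.sum_eq_zero fun p hp => ?_
          rw [Finset.HasAntidiagonal.mem_antidiagonal] at hp
          have : ¬(p.2 = 0 ∧ i = l ∧ p.1 = 0) := by
            rintro ⟨ha, -, hb⟩
            exact hd (by rw [← hp, ha, hb, add_zero])
          rw [if_neg this]
      rw [Finset.sum_congr rfl fun l _ => hterm l]
      rcases eq_or_ne d 0 with rfl | hd
      · simp
      · simp [hd]
    rw [h1, hEu, hL, hR]
    ring
  -- Step 7: the constant part of X vanishes, hence X = 0
  have hX0 : ∀ (i j : Fin n) (d : Fin r →₀ ℕ), (X i j d).coeff 0 = 0 := by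
    intro i j d
    rw [hXeqR d i j]
    have hsum : (∑ l, ∑ p ∈ (Finset.HasAntidiagonal.antidiagonal d).erase (d, (0 : Fin r →₀ ℕ)),
        X i l p.1 * Sm l j p.2).coeff 0 = 0 := by
      rw [coeff_sum]
      refine Finset.sum_eq_zero fun l _ => ?_
      rw [coeff_sum]
      refine Finset.sum_eq_zero fun p hp => ?_
      rw [constH_mul_coeff0 (hXconst i l p.1), hSm00]
      obtain ⟨hne, hpd⟩ := Finset.mem_erase.mp hp
      rw [Finset.HasAntidiagonal.mem_antidiagonal] at hpd
      have : ¬(l = j ∧ p.2 = 0) := by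
        rintro ⟨-, h2⟩
        exact hne (Prod.ext (by rw [← hpd, h2, add_zero]) h2)
      rw [if_neg this, mul_zero]
    have hco : ((-(K i j d)) - ∑ l, ∑ p ∈ (Finset.HasAntidiagonal.antidiagonal d).erase (d, (0 : Fin r →₀ ℕ)),
        X i l p.1 * Sm l j p.2).coeff 0
        = -((K i j d).coeff 0) - (∑ l, ∑ p ∈ (Finset.HasAntidiagonal.antidiagonal d).erase (d, (0 : Fin r →₀ ℕ)),
            X i l p.1 * Sm l j p.2).coeff 0 := by
      rw [HahnSeries.coeff_sub, HahnSeries.coeff_neg]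
    rw [hco, hsum, hK0, neg_zero, sub_zero]
  have hXzero : X = 0 := by
    refine Matrix.ext fun i j => ?_
    funext d
    show X i j d = 0
    ext k
    rcases eq_or_ne k 0 with rfl | hk
    · rw [hX0]; rfl
    · rw [hXconst i j d k hk]; rfl
  constructor
  · rw [← hSpX, hXzero, Matrix.mul_zero]
  · have h := hXSm
    rw [hXzero, Matrix.zero_mul] at h
    exact neg_eq_zero.mp h.symm
end
end

section
/- Let Ω_1,…,Ω_r ∈ Mat_n(ℂ[ħ][[q]]) with constant terms P_a := Ω_a|_{q=0} ∈ Mat_n(ℂ) independent of ħ, and define the operators ∇_a := ħθ_a + Ω_a on the module (ℂ[ħ][[q]])^n. Let e_0 ∈ ℂ^n be such that ℂ^n is spanned over ℂ by the vectors P_{a_1}P_{a_2}⋯P_{a_k}·e_0 over all k ≥ 0 and a_1,…,a_k ∈ {1,…,r}. Then the ℂ[ħ][[q]]-submodule of (ℂ[ħ][[q]])^n generated by the vectors ∇_{a_1}∇_{a_2}⋯∇_{a_k}·e_0 (k ≥ 0, a_i ∈ {1,…,r}) is the whole module (ℂ[ħ][[q]])^n. -/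
/-!
Work over ℂ.  `RR r = ℂ[ħ][[q¹,…,qʳ]]` is the ring of formal power series in
`q` with coefficients polynomials in `ħ`, and `θ_a = qᵃ·∂/∂qᵃ` the logarithmic
partial derivative.
-/

noncomputable section

/-- `ℂ[ħ][[q¹,…,qʳ]]`. -/
abbrev RR (r : ℕ) := MvPowerSeries (Fin r) (Polynomial ℂ)

/-- The logarithmic derivative `θ_a = qᵃ ∂/∂qᵃ` on `ℂ[ħ][[q]]`. -/
def thetaP {r : ℕ} (a : Fin r) (x : RR r) : RR r :=
  fun d => ((d a : ℕ) : Polynomial ℂ) * x d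

/-- `ħ` as an element of `ℂ[ħ][[q]]`. -/
def hbarP (r : ℕ) : RR r := MvPowerSeries.C (σ := Fin r) (R := Polynomial ℂ) Polynomial.X

/-- The embedding `ℂ → ℂ[ħ][[q]]`. -/
def cP (r : ℕ) : ℂ →+* RR r :=
  (MvPowerSeries.C (σ := Fin r) (R := Polynomial ℂ)).comp (Polynomial.C : ℂ →+* Polynomial ℂ)

/-- The operator `∇_a = ħθ_a + Ω_a` acting on `(ℂ[ħ][[q]])ⁿ`. -/
def nabla {r n : ℕ} (Ω : Fin r → Matrix (Fin n) (Fin n) (RR r)) (a : Fin r)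
    (v : Fin n → RR r) : Fin n → RR r :=
  fun i => hbarP r * thetaP a (v i) + ((Ω a).mulVec v) i

/-- The constant coefficient of `θ_a x` vanishes. -/
lemma constantCoeff_thetaP {r : ℕ} (a : Fin r) (x : RR r) :
    MvPowerSeries.constantCoeff (σ := Fin r) (R := Polynomial ℂ) (thetaP a x) = 0 := by
  show thetaP a x 0 = 0
  simp [thetaP]

/-- Constant coefficients of `∇`-words are the corresponding `P`-words. -/
lemma constantCoeff_word {r n : ℕ}
    (Ω : Fin r → Matrix (Fin n) (Fin n) (RR r))
    (P : Fin r → Matrix (Fin n) (Fin n) ℂ)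
    (hP : ∀ a i j, MvPowerSeries.constantCoeff (σ := Fin r) (R := Polynomial ℂ) (Ω a i j) =
      Polynomial.C (P a i j))
    (e0 : Fin n → ℂ) (l : List (Fin r)) (i : Fin n) :
    MvPowerSeries.constantCoeff (σ := Fin r) (R := Polynomial ℂ)
        ((l.foldr (nabla Ω) (fun i => cP r (e0 i))) i) =
      Polynomial.C ((((l.map P).prod).mulVec e0) i) := by
  induction l generalizing i with
  | nil => simp [cP, Matrix.one_mulVec]
  | cons a t ih =>
    simp only [List.foldr_cons, List.map_cons, List.prod_cons, nabla]
    rw [map_add, map_mul, constantCoeff_thetaP, mul_zero, zero_add]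
    have : ((Ω a).mulVec (t.foldr (nabla Ω) (fun i => cP r (e0 i)))) i =
        ∑ j, Ω a i j * (t.foldr (nabla Ω) (fun i => cP r (e0 i))) j := rfl
    rw [this, map_sum]
    have : (((P a * (t.map P).prod)).mulVec e0) i =
        ∑ j, P a i j * (((t.map P).prod).mulVec e0) j := by
      rw [← Matrix.mulVec_mulVec]; rfl
    rw [this, map_sum]
    congr 1
    funext j
    rw [map_mul, hP, ih, map_mul]

/-- **Generation of the quantum `D`-module by the `J`-function** (the
generation statement underlying Theorems 2.6 and 3.12: `D/I ≅ E`).  Let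
`Ω_a ∈ Mat_n(ℂ[ħ][[q]])` have `ħ`-independent constant terms
`P_a = Ω_a|_{q=0} ∈ Mat_n(ℂ)`, and set `∇_a = ħθ_a + Ω_a`.  If `ℂⁿ` is spanned
by the vectors `P_{a_1}⋯P_{a_k}e₀`, then the `ℂ[ħ][[q]]`-submodule of
`(ℂ[ħ][[q]])ⁿ` generated by the vectors `∇_{a_1}⋯∇_{a_k}e₀` is everything. -/
theorem nabla_words_generate {r n : ℕ} (hr : 1 ≤ r) (hn : 1 ≤ n)
    (Ω : Fin r → Matrix (Fin n) (Fin n) (RR r))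
    (P : Fin r → Matrix (Fin n) (Fin n) ℂ)
    (hP : ∀ a i j, MvPowerSeries.constantCoeff (σ := Fin r) (R := Polynomial ℂ) (Ω a i j) =
      Polynomial.C (P a i j))
    (e0 : Fin n → ℂ)
    (hspan : Submodule.span ℂ
      {v : Fin n → ℂ | ∃ l : List (Fin r), v = ((l.map P).prod).mulVec e0} = ⊤) :
    Submodule.span (RR r)
      {v : Fin n → RR r | ∃ l : List (Fin r),
        v = l.foldr (nabla Ω) (fun i => cP r (e0 i))} = ⊤ := by
  classical
  set S : Set (Fin n → ℂ) :=
    {v : Fin n → ℂ | ∃ l : List (Fin r), v = ((l.map P).prod).mulVec e0} with hS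
  -- choose a basis of ℂⁿ inside S
  obtain ⟨t, hts, htspan, htli⟩ := exists_linearIndependent ℂ S
  rw [hspan] at htspan
  set bs : Module.Basis t ℂ (Fin n → ℂ) := Module.Basis.mk htli (by rw [Subtype.range_val]; exact htspan.ge)
    with hbs
  haveI : Fintype t := FiniteDimensional.fintypeBasisIndex bs
  have hcard : Fintype.card t = n := by
    have h1 := Module.finrank_eq_card_basis bs
    rw [Module.finrank_fin_fun ℂ] at h1
    omega
  have e : t ≃ Fin n := Fintype.equivFinOfCardEq hcard
  set b : Module.Basis (Fin n) ℂ (Fin n → ℂ) := bs.reindex e with hb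
  have hbS : ∀ j, b j ∈ S := by
    intro j
    rw [hb, Module.Basis.reindex_apply, hbs, Module.Basis.mk_apply]
    exact hts (e.symm j).2
  -- the complex matrix of the basis, and its invertibility
  set B : Matrix (Fin n) (Fin n) ℂ := (Pi.basisFun ℂ (Fin n)).toMatrix b with hBdef
  haveI : Invertible B := (Pi.basisFun ℂ (Fin n)).invertibleToMatrix b
  have hBunit : IsUnit B.det := Matrix.isUnit_iff_isUnit_det B |>.mp (isUnit_of_invertible B)
  have hBentry : ∀ i j, B i j = b j i := by
    intro i j
    simp [hBdef, Module.Basis.toMatrix_apply]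
  -- lists realizing the basis vectors
  have hlists : ∀ j : Fin n, ∃ l : List (Fin r), b j = ((l.map P).prod).mulVec e0 :=
    fun j => hbS j
  choose L hL using hlists
  set w : Fin n → (Fin n → RR r) :=
    fun j => (L j).foldr (nabla Ω) (fun i => cP r (e0 i)) with hw
  set A : Matrix (Fin n) (Fin n) (RR r) := Matrix.of (fun i j => w j i) with hA
  -- the constant coefficient of A is C ∘ B
  have hAcc : A.map (MvPowerSeries.constantCoeff (σ := Fin r) (R := Polynomial ℂ)) =
      B.map (Polynomial.C : ℂ →+* Polynomial ℂ) := by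
    ext i j
    simp only [Matrix.map_apply, hA, Matrix.of_apply, hw]
    rw [constantCoeff_word Ω P hP e0 (L j) i, hBentry i j, hL j]
  -- det A is a unit
  have hdetA : IsUnit A.det := by
    rw [MvPowerSeries.isUnit_iff_constantCoeff,
      (MvPowerSeries.constantCoeff (σ := Fin r) (R := Polynomial ℂ)).map_det,
      RingHom.mapMatrix_apply, hAcc, ← RingHom.mapMatrix_apply,
      ← (Polynomial.C : ℂ →+* Polynomial ℂ).map_det]
    exact hBunit.map _
  -- every vector is an RR-combination of the columns of A
  rw [eq_top_iff]
  rintro v -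
  have hAinv : A * A⁻¹ = 1 := Matrix.mul_nonsing_inv A hdetA
  have hv : v = ∑ j, (A⁻¹.mulVec v) j • w j := by
    funext i
    have : (∑ j, (A⁻¹.mulVec v) j • w j) i = ∑ j, A i j * (A⁻¹.mulVec v) j := by
      simp only [Finset.sum_apply, Pi.smul_apply, smul_eq_mul, hA, Matrix.of_apply]
      exact Finset.sum_congr rfl (fun j _ => mul_comm _ _)
    rw [this]
    have : ∑ j, A i j * (A⁻¹.mulVec v) j = (A.mulVec (A⁻¹.mulVec v)) i := rfl
    rw [this, Matrix.mulVec_mulVec, hAinv, Matrix.one_mulVec]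
  rw [hv]
  exact Submodule.sum_mem _ (fun j _ =>
    Submodule.smul_mem _ _ (Submodule.subset_span ⟨L j, rfl⟩))
end
end
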